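/- Let (X,d) be a geodesic metric space with path system PS, and suppose A ⊂ X is PS-contracting with constant C via a map π_A: X → A. Then for every x ∈ X and every closest-point projection p ∈ A (d(x,p) = d(x,A)), we have d(π_A(x), p) ≤ 2C. -/
import Mathlib


open Set

variable {X : Type*} [MetricSpace X]

/-- `f` restricted to `[a,b]` is a `(K,C)`-quasigeodesic. -/
def IsQuasiGeodesicOn (K C : ℝ) (f : ℝ → X) (a b : ℝ) : Prop :=
  ∀ s ∈ Set.Icc a b, ∀ t ∈ Set.Icc a b,
    |s - t| / K - C ≤ dist (f s) (f t) ∧ dist (f s) (f t) ≤ K * |s - t| + C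

/-- `f` restricted to `[a,b]` is a geodesic. -/
def IsGeodesicOn (f : ℝ → X) (a b : ℝ) : Prop :=
  ∀ s ∈ Set.Icc a b, ∀ t ∈ Set.Icc a b, dist (f s) (f t) = |s - t|

/-- `(X,d)` is a geodesic metric space. -/
def IsGeodesicSpace (X : Type*) [MetricSpace X] : Prop :=
  ∀ x y : X, ∃ f : ℝ → X, f 0 = x ∧ f (dist x y) = y ∧ IsGeodesicOn f 0 (dist x y)

/-- A path system on `X` (Sisto): a family of `(K,C)`-quasigeodesic paths, closed under
subpaths, connecting every pair of distinct points. `mem f a b` means the path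
`f : [a,b] → X` belongs to the system. -/
structure PathSystem (X : Type*) [MetricSpace X] where
  K : ℝ
  C : ℝ
  one_le_K : 1 ≤ K
  C_nonneg : 0 ≤ C
  mem : (ℝ → X) → ℝ → ℝ → Prop
  quasi : ∀ f a b, mem f a b → IsQuasiGeodesicOn K C f a b
  subpath : ∀ f a b, mem f a b → ∀ a' b', a ≤ a' → a' ≤ b' → b' ≤ b → mem f a' b'
  connects : ∀ x y : X, x ≠ y → ∃ f a b, a ≤ b ∧ mem f a b ∧ f a = x ∧ f b = y

/-- `A ⊆ X` is `PS`-contracting with constant `Cc` via the map `π` (Sisto):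
points of `A` move at most `Cc` under `π`, and whenever `dist (π x) (π y) ≥ Cc`,
every path of `PS` from `x` to `y` passes within `Cc` of both `π x` and `π y`. -/
def PSContractingWith (PS : PathSystem X) (A : Set X) (Cc : ℝ) (π : X → X) : Prop :=
  (∀ x : X, π x ∈ A) ∧ (∀ x ∈ A, dist x (π x) ≤ Cc) ∧
    ∀ (f : ℝ → X) (a b : ℝ), a ≤ b → PS.mem f a b →
      Cc ≤ dist (π (f a)) (π (f b)) →
        (∃ t ∈ Set.Icc a b, dist (f t) (π (f a)) ≤ Cc) ∧
        (∃ t ∈ Set.Icc a b, dist (f t) (π (f b)) ≤ Cc)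

/-- `A ⊆ X` is `PS`-contracting. -/
def IsContractingSet (PS : PathSystem X) (A : Set X) : Prop :=
  ∃ Cc : ℝ, ∃ π : X → X, PSContractingWith PS A Cc π

/-- `g ∈ G` is a contracting element for `(X, PS)` (Sisto): `g` has infinite order,
some orbit `⟨g⟩x₀` is a quasigeodesic embedding of `ℤ`, and there is a `⟨g⟩`-invariant
`PS`-contracting subset containing `x₀` with cobounded `⟨g⟩` action. -/
def IsContractingElement {G : Type*} [Group G] [MulAction G X]
    (PS : PathSystem X) (g : G) : Prop :=
  ∃ x₀ : X,
    (∀ n : ℤ, n ≠ 0 → g ^ n ≠ 1) ∧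
    (∃ K C : ℝ, 1 ≤ K ∧ 0 ≤ C ∧ ∀ m n : ℤ,
      |(m : ℝ) - (n : ℝ)| / K - C ≤ dist ((g ^ m) • x₀) ((g ^ n) • x₀) ∧
        dist ((g ^ m) • x₀) ((g ^ n) • x₀) ≤ K * |(m : ℝ) - (n : ℝ)| + C) ∧
    ∃ A : Set X, x₀ ∈ A ∧ (∀ n : ℤ, ∀ y ∈ A, (g ^ n) • y ∈ A) ∧
      IsContractingSet PS A ∧
      ∃ R : ℝ, ∀ y ∈ A, ∃ n : ℤ, dist y ((g ^ n) • x₀) ≤ R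

/-- If `A ⊆ X` is `PS`-contracting with constant `C` via `π_A` for a geodesic path system
`PS`, then for every `x ∈ X` and every closest point `p ∈ A` to `x`,
`dist (π_A x) p ≤ 2C`. -/
theorem projection_close_to_closest_point
    {X : Type*} [MetricSpace X] (PS : PathSystem X)
    (hgeodPS : ∀ f a b, PS.mem f a b → IsGeodesicOn f a b)
    (A : Set X) (Cc : ℝ) (π : X → X) (hcontr : PSContractingWith PS A Cc π)
    (x : X) (p : X) (hp : p ∈ A) (hclosest : dist x p = Metric.infDist x A) :
    dist (π x) p ≤ 2 * Cc := by
  obtain ⟨hπA, hAmove, hcond⟩ := hcontr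
  have hCc : 0 ≤ Cc := le_trans dist_nonneg (hAmove (π x) (hπA x))
  by_cases hxp : x = p
  · have : dist p (π p) ≤ Cc := hAmove p hp
    rw [hxp, dist_comm]
    linarith
  obtain ⟨f, a, b, hab, hmem, hfa, hfb⟩ := PS.connects x p hxp
  by_cases hbig : Cc ≤ dist (π (f a)) (π (f b))
  · obtain ⟨⟨t, ht, hdt⟩, -⟩ := hcond f a b hab hmem hbig
    rw [hfa] at hdt
    have hgeo := hgeodPS f a b hmem
    have h1 : dist x (f t) = t - a := by
      rw [← hfa, hgeo a ⟨le_refl a, hab⟩ t ht, abs_of_nonpos (by linarith [ht.1])]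
      ring
    have h2 : dist (f t) p = b - t := by
      rw [← hfb, hgeo t ht b ⟨hab, le_refl b⟩, abs_of_nonpos (by linarith [ht.2])]
      ring
    have hxpd : dist x p = b - a := by
      rw [← hfa, ← hfb, hgeo a ⟨le_refl a, hab⟩ b ⟨hab, le_refl b⟩,
        abs_of_nonpos (by linarith)]
      ring
    have hinf : dist x p ≤ dist x (π x) := by
      rw [hclosest]; exact Metric.infDist_le_dist_of_mem (hπA x)
    have htri : dist x (π x) ≤ dist x (f t) + dist (f t) (π x) := dist_triangle _ _ _
    have htri2 : dist (π x) p ≤ dist (π x) (f t) + dist (f t) p := dist_triangle _ _ _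
    rw [dist_comm (π x) (f t)] at htri2
    linarith
  · push_neg at hbig
    rw [hfa, hfb] at hbig
    have h1 : dist p (π p) ≤ Cc := hAmove p hp
    have h2 : dist (π x) p ≤ dist (π x) (π p) + dist (π p) p := dist_triangle _ _ _
    rw [dist_comm (π p) p] at h2
    linarith
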